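/- With the notation of the preceding statement (a_j the recurrence, b = -2(Λ/(2m+1) - ulΛ/(2m+2)) a_m), the function λ₀ satisfies the second-order linear ODE λ₀'' + 2(2m+1) tan φ · λ₀' + (−4m(m+1) + 2(m+1)(2m+1) sec² φ) λ₀ = 2(m+1)Λ sec² φ − 2m·ulΛ on (-π/2, π/2). -/

import Mathlib

open Real

/-- The sequence `a₀ = 1`, `a_j = ((2m - 2j + 4)/(2m - 2j + 1)) a_{j-1}`. -/
noncomputable def aSeq (m : ℕ) : ℕ → ℝ
  | 0 => 1
  | j + 1 => ((2 * (m : ℝ) - 2 * ((j : ℝ) + 1) + 4) / (2 * (m : ℝ) - 2 * ((j : ℝ) + 1) + 1))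
      * aSeq m j

/-- `λ₀(φ) = ulΛ/(2m+2) + (Λ/(2m+1) − ulΛ/(2m+2))(Σ_{j=0}^m a_j cos^{2j}φ − 2 a_m cos^{2m+2}φ)
  + c cos^{2m+1}φ sin φ`. -/
noncomputable def lam0 (m : ℕ) (Λ ulΛ c : ℝ) (φ : ℝ) : ℝ :=
  ulΛ / (2 * (m : ℝ) + 2)
    + (Λ / (2 * (m : ℝ) + 1) - ulΛ / (2 * (m : ℝ) + 2)) *
        ((∑ j ∈ Finset.range (m + 1), aSeq m j * Real.cos φ ^ (2 * j))
          - 2 * aSeq m m * Real.cos φ ^ (2 * m + 2))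
    + c * Real.cos φ ^ (2 * m + 1) * Real.sin φ

noncomputable def SS (m : ℕ) (φ : ℝ) : ℝ :=
  (∑ j ∈ Finset.range m, aSeq m (j+1) * (-((2*(j:ℝ)+2) * Real.cos φ ^ (2*j+1))))
    + 2 * aSeq m m * ((2*(m:ℝ)+2) * Real.cos φ ^ (2*m+1))

noncomputable def TT (m : ℕ) (φ : ℝ) : ℝ :=
  (∑ j ∈ Finset.range m, aSeq m (j+1) * ((2*(j:ℝ)+2)*(2*(j:ℝ)+1) * Real.cos φ ^ (2*j)))
    - 2 * aSeq m m * ((2*(m:ℝ)+2)*(2*(m:ℝ)+1) * Real.cos φ ^ (2*m))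

noncomputable def D1 (m : ℕ) (Λ ulΛ c : ℝ) (φ : ℝ) : ℝ :=
  (Λ / (2*(m:ℝ)+1) - ulΛ / (2*(m:ℝ)+2)) * (Real.sin φ * SS m φ)
    + c * ((2*(m:ℝ)+2) * Real.cos φ ^ (2*m+2) - (2*(m:ℝ)+1) * Real.cos φ ^ (2*m))

noncomputable def D2 (m : ℕ) (Λ ulΛ c : ℝ) (φ : ℝ) : ℝ :=
  (Λ / (2*(m:ℝ)+1) - ulΛ / (2*(m:ℝ)+2)) * (Real.cos φ * SS m φ + Real.sin φ ^ 2 * TT m φ)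
    + c * Real.sin φ * ((2*(m:ℝ)+1)*(2*(m:ℝ)) * Real.cos φ ^ (2*m-1)
        - (2*(m:ℝ)+2)*(2*(m:ℝ)+2) * Real.cos φ ^ (2*m+1))

lemma hasDerivAt_lam0 (m : ℕ) (Λ ulΛ c : ℝ) (φ : ℝ) :
    HasDerivAt (lam0 m Λ ulΛ c) (D1 m Λ ulΛ c φ) φ := by
  have h1 : HasDerivAt (fun x => ∑ j ∈ Finset.range (m+1), aSeq m j * Real.cos x ^ (2*j))
      (∑ j ∈ Finset.range (m+1),
        aSeq m j * (((2*j : ℕ) : ℝ) * Real.cos φ ^ (2*j-1) * (-Real.sin φ))) φ :=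
    HasDerivAt.fun_sum fun j _ => ((Real.hasDerivAt_cos φ).pow (2*j)).const_mul _
  have h2 : HasDerivAt (fun x : ℝ => Real.cos x ^ (2*m+2))
      (((2*m+2 : ℕ) : ℝ) * Real.cos φ ^ (2*m+2-1) * (-Real.sin φ)) φ :=
    (Real.hasDerivAt_cos φ).pow _
  have h3 : HasDerivAt (fun x : ℝ => c * Real.cos x ^ (2*m+1) * Real.sin x)
      (c * (((2*m+1 : ℕ) : ℝ) * Real.cos φ ^ (2*m+1-1) * (-Real.sin φ)) * Real.sin φ
        + c * Real.cos φ ^ (2*m+1) * Real.cos φ) φ :=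
    (((Real.hasDerivAt_cos φ).pow _).const_mul c).mul (Real.hasDerivAt_sin φ)
  have H := (((h1.sub (h2.const_mul (2 * aSeq m m))).const_mul
      (Λ / (2*(m:ℝ)+1) - ulΛ / (2*(m:ℝ)+2))).const_add (ulΛ / (2*(m:ℝ)+2))).add h3
  have hsum : (∑ j ∈ Finset.range (m+1),
        aSeq m j * (((2*j : ℕ) : ℝ) * Real.cos φ ^ (2*j-1) * (-Real.sin φ)))
      = Real.sin φ *
          ∑ j ∈ Finset.range m, aSeq m (j+1) * (-((2*(j:ℝ)+2) * Real.cos φ ^ (2*j+1))) := by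
    simp only [Finset.sum_range_succ', Finset.mul_sum]
    rw [show aSeq m 0 * (((2*0 : ℕ) : ℝ) * Real.cos φ ^ (2*0-1) * (-Real.sin φ)) = 0 by
      norm_num, add_zero]
    exact Finset.sum_congr rfl fun j _ => by
      rw [show 2*(j+1)-1 = 2*j+1 by omega]
      push_cast
      ring
  refine H.congr_deriv ?_
  simp only [D1, SS]
  rw [hsum, show 2*m+2-1 = 2*m+1 by omega, show 2*m+1-1 = 2*m by omega]
  push_cast
  linear_combination (-(c*(2*(m:ℝ)+1)*Real.cos φ^(2*m))) * Real.sin_sq_add_cos_sq φ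

lemma hasDerivAt_SS (m : ℕ) (φ : ℝ) : HasDerivAt (SS m) (Real.sin φ * TT m φ) φ := by
  have h1 : HasDerivAt
      (fun x => ∑ j ∈ Finset.range m, aSeq m (j+1) * (-((2*(j:ℝ)+2) * Real.cos x ^ (2*j+1))))
      (∑ j ∈ Finset.range m, aSeq m (j+1) *
        (-((2*(j:ℝ)+2) * (((2*j+1 : ℕ) : ℝ) * Real.cos φ ^ (2*j+1-1) * (-Real.sin φ))))) φ :=
    HasDerivAt.fun_sum fun j _ =>
      ((((Real.hasDerivAt_cos φ).pow (2*j+1)).const_mul (2*(j:ℝ)+2)).neg).const_mul _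
  have h2 : HasDerivAt (fun x : ℝ => 2 * aSeq m m * ((2*(m:ℝ)+2) * Real.cos x ^ (2*m+1)))
      (2 * aSeq m m * ((2*(m:ℝ)+2) *
        (((2*m+1 : ℕ) : ℝ) * Real.cos φ ^ (2*m+1-1) * (-Real.sin φ)))) φ :=
    (((Real.hasDerivAt_cos φ).pow _).const_mul (2*(m:ℝ)+2)).const_mul _
  refine (h1.add h2).congr_deriv ?_
  simp only [TT, Nat.add_sub_cancel]
  rw [mul_sub, Finset.mul_sum, sub_eq_add_neg]
  exact congrArg₂ (· + ·)
    (Finset.sum_congr rfl fun j _ => by push_cast; ring)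
    (by push_cast; ring)

lemma hasDerivAt_D1 (m : ℕ) (Λ ulΛ c : ℝ) (φ : ℝ) :
    HasDerivAt (D1 m Λ ulΛ c) (D2 m Λ ulΛ c φ) φ := by
  have hB : HasDerivAt
      (fun x => (Λ / (2*(m:ℝ)+1) - ulΛ / (2*(m:ℝ)+2)) * (Real.sin x * SS m x))
      ((Λ / (2*(m:ℝ)+1) - ulΛ / (2*(m:ℝ)+2)) *
        (Real.cos φ * SS m φ + Real.sin φ * (Real.sin φ * TT m φ))) φ :=
    ((Real.hasDerivAt_sin φ).mul (hasDerivAt_SS m φ)).const_mul _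
  have hc : HasDerivAt
      (fun x : ℝ => c * ((2*(m:ℝ)+2) * Real.cos x ^ (2*m+2) - (2*(m:ℝ)+1) * Real.cos x ^ (2*m)))
      (c * ((2*(m:ℝ)+2) * (((2*m+2 : ℕ) : ℝ) * Real.cos φ ^ (2*m+2-1) * (-Real.sin φ))
        - (2*(m:ℝ)+1) * (((2*m : ℕ) : ℝ) * Real.cos φ ^ (2*m-1) * (-Real.sin φ)))) φ :=
    ((((Real.hasDerivAt_cos φ).pow _).const_mul _).sub
      (((Real.hasDerivAt_cos φ).pow _).const_mul _)).const_mul c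
  refine (hB.add hc).congr_deriv ?_
  simp only [D2]
  rw [show 2*m+2-1 = 2*m+1 by omega]
  push_cast
  ring

lemma key1 (m : ℕ) (u : ℝ) :
    (∑ j ∈ Finset.range (m+1), aSeq m j *
        ((2*(2*(j:ℝ) - (2*(m:ℝ)+1)) * ((j:ℝ) - ((m:ℝ)+1))) * u^(2*j)
          + (-4*((m:ℝ)-(j:ℝ))*((m:ℝ)-(j:ℝ)+1)) * u^(2*j+2)))
      = 2*(2*(m:ℝ)+1)*((m:ℝ)+1) := by
  have step : ∀ j ∈ Finset.range (m+1),
      aSeq m j * ((2*(2*(j:ℝ) - (2*(m:ℝ)+1)) * ((j:ℝ) - ((m:ℝ)+1))) * u^(2*j)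
          + (-4*((m:ℝ)-(j:ℝ))*((m:ℝ)-(j:ℝ)+1)) * u^(2*j+2))
      = (fun i => aSeq m i * (2*(2*(i:ℝ) - (2*(m:ℝ)+1)) * ((i:ℝ) - ((m:ℝ)+1))) * u^(2*i)) j
        - (fun i => aSeq m i * (2*(2*(i:ℝ) - (2*(m:ℝ)+1)) * ((i:ℝ) - ((m:ℝ)+1))) * u^(2*i))
            (j+1) := by
    intro j _
    have hne : 2*(m:ℝ) - 2*((j:ℝ)+1) + 1 ≠ 0 := by
      intro h
      have h2 : 2*(m:ℝ) = 2*(j:ℝ) + 1 := by linarith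
      have h3 : (2*m : ℕ) = 2*j + 1 := by exact_mod_cast h2
      omega
    beta_reduce
    rw [show aSeq m (j+1) = ((2*(m:ℝ) - 2*((j:ℝ)+1) + 4) / (2*(m:ℝ) - 2*((j:ℝ)+1) + 1))
      * aSeq m j from rfl]
    push_cast
    rw [div_mul_eq_mul_div, div_mul_eq_mul_div, eq_sub_iff_add_eq, div_mul_eq_mul_div, add_div' _ _ _ hne, div_eq_iff hne]
    ring
  rw [Finset.sum_congr rfl step, Finset.sum_range_sub'
    (fun i => aSeq m i * (2*(2*(i:ℝ) - (2*(m:ℝ)+1)) * ((i:ℝ) - ((m:ℝ)+1))) * u^(2*i)) (m+1)]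
  rw [show aSeq m 0 = 1 from rfl]
  push_cast
  ring

lemma key2 (m : ℕ) (u : ℝ) :
    (∑ j ∈ Finset.range m, aSeq m (j+1) *
        ((2*(2*(j:ℝ)+1-2*(m:ℝ))*((j:ℝ)-(m:ℝ))) * u^(2*j+2)
          + (-4*((m:ℝ)-(j:ℝ)-1)*((m:ℝ)-(j:ℝ))) * u^(2*j+4)))
      = 4*(m:ℝ)*((m:ℝ)+1)*u^2 := by
  have h := key1 m u
  rw [Finset.sum_range_succ'] at h
  have e : (∑ j ∈ Finset.range m, aSeq m (j+1) *
        ((2*(2*((j+1 : ℕ):ℝ) - (2*(m:ℝ)+1)) * (((j+1 : ℕ):ℝ) - ((m:ℝ)+1))) * u^(2*(j+1))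
          + (-4*((m:ℝ)-((j+1 : ℕ):ℝ))*((m:ℝ)-((j+1 : ℕ):ℝ)+1)) * u^(2*(j+1)+2)))
      = (∑ j ∈ Finset.range m, aSeq m (j+1) *
        ((2*(2*(j:ℝ)+1-2*(m:ℝ))*((j:ℝ)-(m:ℝ))) * u^(2*j+2)
          + (-4*((m:ℝ)-(j:ℝ)-1)*((m:ℝ)-(j:ℝ))) * u^(2*j+4))) :=
    Finset.sum_congr rfl fun j _ => by push_cast; ring
  rw [e, show aSeq m 0 = 1 from rfl] at h
  push_cast at h
  linear_combination h

lemma key3 (m : ℕ) (u : ℝ) :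
    (1-u^2)*u^2 * (∑ j ∈ Finset.range m, aSeq m (j+1) * ((2*(j:ℝ)+2)*(2*(j:ℝ)+1) * u^(2*j)))
      + (u^3 + 2*(2*(m:ℝ)+1)*u*(1-u^2)) *
          (∑ j ∈ Finset.range m, aSeq m (j+1) * (-((2*(j:ℝ)+2) * u^(2*j+1))))
      + (-4*(m:ℝ)*((m:ℝ)+1)*u^2 + 2*((m:ℝ)+1)*(2*(m:ℝ)+1)) *
          (∑ j ∈ Finset.range m, aSeq m (j+1) * u^(2*j+2))
      = 4*(m:ℝ)*((m:ℝ)+1)*u^2 := by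
  rw [← key2 m u, Finset.mul_sum, Finset.mul_sum, Finset.mul_sum, ← Finset.sum_add_distrib,
    ← Finset.sum_add_distrib]
  exact Finset.sum_congr rfl fun j _ => by push_cast; ring

lemma mainAlg (m : ℕ) (hm : 1 ≤ m) (Λ ulΛ c u s A B P0 P1 P2 am : ℝ)
    (hu : u ≠ 0) (hs : s^2 = 1 - u^2)
    (hA : (2*(m:ℝ)+2)*A = ulΛ)
    (hB : (2*(m:ℝ)+1)*B = Λ - (2*(m:ℝ)+1)*A)
    (hkey : (1-u^2)*u^2*P2 + (u^3 + 2*(2*(m:ℝ)+1)*u*(1-u^2))*P1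
        + (-4*(m:ℝ)*((m:ℝ)+1)*u^2 + 2*((m:ℝ)+1)*(2*(m:ℝ)+1))*P0 = 4*(m:ℝ)*((m:ℝ)+1)*u^2) :
    (B * (u * (P1 + 2*am*((2*(m:ℝ)+2) * u^(2*m+1)))
          + s^2 * (P2 - 2*am*((2*(m:ℝ)+2)*(2*(m:ℝ)+1) * u^(2*m))))
       + c * s * ((2*(m:ℝ)+1)*(2*(m:ℝ)) * u^(2*m-1) - (2*(m:ℝ)+2)*(2*(m:ℝ)+2) * u^(2*m+1)))
    + 2*(2*(m:ℝ)+1) * (s/u) * (B * (s * (P1 + 2*am*((2*(m:ℝ)+2) * u^(2*m+1))))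
       + c * ((2*(m:ℝ)+2) * u^(2*m+2) - (2*(m:ℝ)+1) * u^(2*m)))
    + (-(4*(m:ℝ)*((m:ℝ)+1)) + 2*((m:ℝ)+1)*(2*(m:ℝ)+1)*(1/u)^2)
        * (A + B*(1 + P0 - 2*am*u^(2*m+2)) + c*u^(2*m+1)*s)
    = 2*((m:ℝ)+1)*Λ*(1/u)^2 - 2*(m:ℝ)*ulΛ := by
  obtain ⟨n, rfl⟩ : ∃ n, m = n + 1 := ⟨m-1, by omega⟩
  have hiu : u * (1/u) = 1 := by field_simp
  rw [show 2*(n+1)-1 = 2*n+1 by omega, show 2*(n+1) = 2*n+2 by omega]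
  push_cast at hA hB hkey ⊢
  refine mul_left_cancel₀ (pow_ne_zero 2 hu) ?_
  linear_combination
    ((u*(1/u)+1) * (2*((n:ℝ)+2)*(2*(n:ℝ)+3)*(A + B*(1 + P0 - 2*am*u^(2*n+4)) + c*u^(2*n+3)*s)
        - 2*((n:ℝ)+2)*Λ)
      + u * (2*(2*(n:ℝ)+3)*s*(B*(s*(P1 + 2*am*((2*(n:ℝ)+4) * u^(2*n+3))))
        + c*((2*(n:ℝ)+4)*u^(2*n+4) - (2*(n:ℝ)+3)*u^(2*n+2))))) * hiu
    + B * hkey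
    + (B*u^2*(P2 - 2*am*((2*(n:ℝ)+4)*(2*(n:ℝ)+3) * u^(2*n+2)))
        + 2*(2*(n:ℝ)+3)*u*B*(P1 + 2*am*((2*(n:ℝ)+4) * u^(2*n+3)))) * hs
    + (-(2*((n:ℝ)+1)*u^2)) * hA
    + (2*((n:ℝ)+2)) * hB

/-- `λ₀` satisfies the second-order linear ODE
`λ₀'' + 2(2m+1) tan φ λ₀' + (−4m(m+1) + 2(m+1)(2m+1) sec²φ) λ₀ = 2(m+1)Λ sec²φ − 2m ulΛ`
on `(-π/2, π/2)`. -/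
theorem stmt8 (m : ℕ) (hm : 2 ≤ m) (Λ ulΛ c : ℝ) :
    ∀ φ ∈ Set.Ioo (-(π / 2)) (π / 2),
      deriv (deriv (lam0 m Λ ulΛ c)) φ
        + 2 * (2 * (m : ℝ) + 1) * Real.tan φ * deriv (lam0 m Λ ulΛ c) φ
        + (-(4 * (m : ℝ) * ((m : ℝ) + 1))
            + 2 * ((m : ℝ) + 1) * (2 * (m : ℝ) + 1) * (1 / Real.cos φ) ^ 2)
          * lam0 m Λ ulΛ c φ
        = 2 * ((m : ℝ) + 1) * Λ * (1 / Real.cos φ) ^ 2 - 2 * (m : ℝ) * ulΛ := by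
  intro φ hφ
  have hu : Real.cos φ ≠ 0 := ne_of_gt (Real.cos_pos_of_mem_Ioo hφ)
  have hm1 : 1 ≤ m := by omega
  have hderiv : deriv (lam0 m Λ ulΛ c) = D1 m Λ ulΛ c :=
    funext fun x => (hasDerivAt_lam0 m Λ ulΛ c x).deriv
  rw [hderiv, (hasDerivAt_D1 m Λ ulΛ c φ).deriv]
  have hA : (2*(m:ℝ)+2) * (ulΛ / (2*(m:ℝ)+2)) = ulΛ := by
    have h1 : (2*(m:ℝ)+2) ≠ 0 := by positivity
    field_simp
  have hB : (2*(m:ℝ)+1) * (Λ / (2*(m:ℝ)+1) - ulΛ / (2*(m:ℝ)+2))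
      = Λ - (2*(m:ℝ)+1) * (ulΛ / (2*(m:ℝ)+2)) := by
    have h1 : (2*(m:ℝ)+1) ≠ 0 := by positivity
    field_simp
  have hs : Real.sin φ ^ 2 = 1 - Real.cos φ ^ 2 := Real.sin_sq φ
  have hkey := key3 m (Real.cos φ)
  have hlam : lam0 m Λ ulΛ c φ
      = ulΛ / (2*(m:ℝ)+2) + (Λ / (2*(m:ℝ)+1) - ulΛ / (2*(m:ℝ)+2)) *
          (1 + (∑ j ∈ Finset.range m, aSeq m (j+1) * Real.cos φ ^ (2*j+2))
            - 2*aSeq m m * Real.cos φ ^ (2*m+2))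
        + c * Real.cos φ ^ (2*m+1) * Real.sin φ := by
    simp only [lam0, Finset.sum_range_succ']
    have e : (∑ j ∈ Finset.range m, aSeq m (j+1) * Real.cos φ ^ (2*(j+1)))
        = ∑ j ∈ Finset.range m, aSeq m (j+1) * Real.cos φ ^ (2*j+2) :=
      Finset.sum_congr rfl fun j _ => by rw [show 2*(j+1) = 2*j+2 by omega]
    rw [e, show aSeq m 0 = 1 from rfl]
    ring
  rw [Real.tan_eq_sin_div_cos, hlam]
  simp only [D1, D2, SS, TT]
  linear_combination mainAlg m hm1 Λ ulΛ c (Real.cos φ) (Real.sin φ)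
    (ulΛ / (2*(m:ℝ)+2)) (Λ / (2*(m:ℝ)+1) - ulΛ / (2*(m:ℝ)+2))
    (∑ j ∈ Finset.range m, aSeq m (j+1) * Real.cos φ ^ (2*j+2))
    (∑ j ∈ Finset.range m, aSeq m (j+1) * (-((2*(j:ℝ)+2) * Real.cos φ ^ (2*j+1))))
    (∑ j ∈ Finset.range m, aSeq m (j+1) * ((2*(j:ℝ)+2)*(2*(j:ℝ)+1) * Real.cos φ ^ (2*j)))
    (aSeq m m) hu hs hA hB hkey
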